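/- In the saddle-point setting, with the block-diagonal preconditioner M_D = [[F, 0],[0, H2]] and H = blockdiag(H1, H2), the inverse of the preconditioned matrix satisfies ‖(M_D⁻¹K)⁻¹‖_H ≤ 1 + C₁ + (C₁² + C₁ + 1)(1 + η)²/C₂². -/

import Mathlib

open Matrix

/-- The `H`-norm of a vector: `‖u‖_H = (uᵀ H u)^{1/2}`. -/
noncomputable def vnorm {α : Type*} [Fintype α] (H : Matrix α α ℝ) (u : α → ℝ) : ℝ :=
  Real.sqrt (u ⬝ᵥ (H *ᵥ u))

/-- The weighted operator norm `‖M‖_{H1,H2} = sup_{v ≠ 0} ‖M v‖_{H2} / ‖v‖_{H1}`.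
For a square matrix, `‖M‖_H = wnorm H H M`; the spectral norm is `wnorm 1 1 M`. -/
noncomputable def wnorm {α β : Type*} [Fintype α] [Fintype β]
    (H1 : Matrix α α ℝ) (H2 : Matrix β β ℝ) (M : Matrix β α ℝ) : ℝ :=
  sSup {r : ℝ | ∃ v : α → ℝ, v ≠ 0 ∧ r = vnorm H2 (M *ᵥ v) / vnorm H1 v}
section Helpers

variable {α β : Type*} [Fintype α] [Fintype β]

lemma vnorm_def (H : Matrix α α ℝ) (u : α → ℝ) :
    vnorm H u = Real.sqrt (u ⬝ᵥ (H *ᵥ u)) := rfl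

lemma dot_self_nonneg' (u : α → ℝ) : 0 ≤ u ⬝ᵥ u :=
  Finset.sum_nonneg fun i _ => mul_self_nonneg _

lemma vnorm_nonneg (H : Matrix α α ℝ) (u : α → ℝ) : 0 ≤ vnorm H u := Real.sqrt_nonneg _

lemma vnorm_zero (H : Matrix α α ℝ) : vnorm H (0 : α → ℝ) = 0 := by
  simp [vnorm_def]

lemma vnorm_neg (H : Matrix α α ℝ) (u : α → ℝ) : vnorm H (-u) = vnorm H u := by
  simp [vnorm_def, Matrix.mulVec_neg]

lemma pd_dot_pos {H : Matrix α α ℝ} (hH : H.PosDef) {v : α → ℝ} (hv : v ≠ 0) :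
    0 < v ⬝ᵥ (H *ᵥ v) := by simpa using hH.dotProduct_mulVec_pos hv

lemma psd_dot_nonneg {H : Matrix α α ℝ} (hH : H.PosSemidef) (v : α → ℝ) :
    0 ≤ v ⬝ᵥ (H *ᵥ v) := by simpa using hH.dotProduct_mulVec_nonneg v

lemma vnorm_pos {H : Matrix α α ℝ} (hH : H.PosDef) {v : α → ℝ} (hv : v ≠ 0) :
    0 < vnorm H v := Real.sqrt_pos.mpr (pd_dot_pos hH hv)

lemma vnorm_sq {H : Matrix α α ℝ} (hH : H.PosSemidef) (u : α → ℝ) :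
    vnorm H u ^ 2 = u ⬝ᵥ (H *ᵥ u) :=
  Real.sq_sqrt (psd_dot_nonneg hH u)

lemma dot_cs (u v : α → ℝ) :
    u ⬝ᵥ v ≤ Real.sqrt (u ⬝ᵥ u) * Real.sqrt (v ⬝ᵥ v) := by
  have h : (u ⬝ᵥ v) ^ 2 ≤ (u ⬝ᵥ u) * (v ⬝ᵥ v) := by
    simpa [dotProduct, sq] using Finset.sum_mul_sq_le_sq_mul_sq Finset.univ u v
  calc u ⬝ᵥ v ≤ |u ⬝ᵥ v| := le_abs_self _
    _ = Real.sqrt ((u ⬝ᵥ v) ^ 2) := (Real.sqrt_sq_eq_abs _).symm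
    _ ≤ Real.sqrt ((u ⬝ᵥ u) * (v ⬝ᵥ v)) := Real.sqrt_le_sqrt h
    _ = _ := Real.sqrt_mul (dot_self_nonneg' u) _

lemma psd_cs {H : Matrix α α ℝ} (hH : H.PosSemidef) (u w : α → ℝ) :
    u ⬝ᵥ (H *ᵥ w) ≤ vnorm H u * vnorm H w := by
  obtain ⟨A, hA⟩ : ∃ A : Matrix α α ℝ, H = Aᴴ * A := by
    classical
    open scoped MatrixOrder in
    exact ⟨CFC.sqrt H, by
      rw [(CFC.sqrt_nonneg H).posSemidef.1.eq, CFC.sqrt_mul_sqrt_self H hH.nonneg]⟩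
  have hAt : Aᴴ = Aᵀ := by ext i j; simp [Matrix.conjTranspose_apply]
  have key : ∀ p q : α → ℝ, p ⬝ᵥ (H *ᵥ q) = (A *ᵥ p) ⬝ᵥ (A *ᵥ q) := by
    intro p q
    rw [hA, hAt, ← Matrix.mulVec_mulVec, Matrix.dotProduct_mulVec, Matrix.vecMul_transpose]
  rw [key, vnorm_def, vnorm_def, key, key]
  exact dot_cs _ _

lemma vnorm_triangle {H : Matrix α α ℝ} (hH : H.PosSemidef) (u w : α → ℝ) :
    vnorm H (u + w) ≤ vnorm H u + vnorm H w := by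
  have h1 := psd_cs hH u w
  have h2 := psd_cs hH w u
  have e : (u + w) ⬝ᵥ (H *ᵥ (u + w)) =
      u ⬝ᵥ (H *ᵥ u) + u ⬝ᵥ (H *ᵥ w) + (w ⬝ᵥ (H *ᵥ u) + w ⬝ᵥ (H *ᵥ w)) := by
    rw [Matrix.mulVec_add, dotProduct_add, add_dotProduct, add_dotProduct]
    ring
  rw [vnorm_def, e]
  have hu := vnorm_sq hH u
  have hw := vnorm_sq hH w
  calc Real.sqrt _ ≤ Real.sqrt ((vnorm H u + vnorm H w) ^ 2) := by
        apply Real.sqrt_le_sqrt; nlinarith [vnorm_nonneg H u, vnorm_nonneg H w]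
    _ = vnorm H u + vnorm H w :=
        Real.sqrt_sq (add_nonneg (vnorm_nonneg _ _) (vnorm_nonneg _ _))

lemma dual_cs [DecidableEq α] {H : Matrix α α ℝ} (hH : H.PosDef) (u w : α → ℝ) :
    u ⬝ᵥ w ≤ vnorm H u * vnorm H⁻¹ w := by
  have hdet : IsUnit H.det := isUnit_iff_ne_zero.mpr hH.det_pos.ne'
  have hw : H *ᵥ (H⁻¹ *ᵥ w) = w := by
    rw [Matrix.mulVec_mulVec, Matrix.mul_nonsing_inv _ hdet, Matrix.one_mulVec]
  have h2 : vnorm H (H⁻¹ *ᵥ w) = vnorm H⁻¹ w := by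
    rw [vnorm_def, vnorm_def]
    congr 1
    rw [hw]
    exact dotProduct_comm _ _
  calc u ⬝ᵥ w = u ⬝ᵥ (H *ᵥ (H⁻¹ *ᵥ w)) := by rw [hw]
    _ ≤ vnorm H u * vnorm H (H⁻¹ *ᵥ w) := psd_cs hH.posSemidef _ _
    _ = _ := by rw [h2]

lemma vnorm_inv_mulVec [DecidableEq α] {H : Matrix α α ℝ} (hH : H.PosDef) (z : α → ℝ) :
    vnorm H⁻¹ (H *ᵥ z) = vnorm H z := by
  have hdet : IsUnit H.det := isUnit_iff_ne_zero.mpr hH.det_pos.ne'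
  rw [vnorm_def, vnorm_def]
  congr 1
  rw [Matrix.mulVec_mulVec, Matrix.nonsing_inv_mul _ hdet, Matrix.one_mulVec]
  exact dotProduct_comm _ _

lemma quad_bound (M : Matrix α α ℝ) (u : α → ℝ) :
    u ⬝ᵥ (M *ᵥ u) ≤ (∑ i, ∑ j, |M i j|) * (u ⬝ᵥ u) := by
  have hui : ∀ i, |u i| ≤ Real.sqrt (u ⬝ᵥ u) := by
    intro i
    rw [← Real.sqrt_sq_eq_abs]
    apply Real.sqrt_le_sqrt
    have := Finset.single_le_sum (f := fun j => u j * u j)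
      (fun j _ => mul_self_nonneg _) (Finset.mem_univ i)
    simpa [dotProduct, sq] using this
  have key : ∀ i j, u i * (M i j * u j) ≤ |M i j| * (u ⬝ᵥ u) := by
    intro i j
    calc u i * (M i j * u j) ≤ |u i * (M i j * u j)| := le_abs_self _
      _ = |M i j| * (|u i| * |u j|) := by rw [abs_mul, abs_mul]; ring
      _ ≤ |M i j| * (Real.sqrt (u ⬝ᵥ u) * Real.sqrt (u ⬝ᵥ u)) := by
          apply mul_le_mul_of_nonneg_left _ (abs_nonneg _)
          exact mul_le_mul (hui i) (hui j) (abs_nonneg _) (Real.sqrt_nonneg _)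
      _ = |M i j| * (u ⬝ᵥ u) := by rw [Real.mul_self_sqrt (dot_self_nonneg' u)]
  calc u ⬝ᵥ (M *ᵥ u) = ∑ i, ∑ j, u i * (M i j * u j) := by
        simp [dotProduct, Matrix.mulVec, Finset.mul_sum]
    _ ≤ ∑ i, ∑ j, |M i j| * (u ⬝ᵥ u) :=
        Finset.sum_le_sum fun i _ => Finset.sum_le_sum fun j _ => key i j
    _ = (∑ i, ∑ j, |M i j|) * (u ⬝ᵥ u) := by rw [Finset.sum_mul]; simp [Finset.sum_mul]

lemma dot_le_pd [DecidableEq α] {H : Matrix α α ℝ} (hH : H.PosDef) :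
    ∃ c : ℝ, 0 ≤ c ∧ ∀ u : α → ℝ, u ⬝ᵥ u ≤ c * (u ⬝ᵥ (H *ᵥ u)) := by
  refine ⟨∑ i, ∑ j, |H⁻¹ i j|, Finset.sum_nonneg fun _ _ =>
    Finset.sum_nonneg fun _ _ => abs_nonneg _, fun u => ?_⟩
  set c := ∑ i, ∑ j, |H⁻¹ i j| with hc
  have hc0 : 0 ≤ c := Finset.sum_nonneg fun _ _ => Finset.sum_nonneg fun _ _ => abs_nonneg _
  have h1 : u ⬝ᵥ u ≤ vnorm H u * vnorm H⁻¹ u := dual_cs hH u u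
  have h2 : vnorm H⁻¹ u ≤ Real.sqrt (c * (u ⬝ᵥ u)) := by
    rw [vnorm_def]
    exact Real.sqrt_le_sqrt (quad_bound H⁻¹ u)
  have h3 : u ⬝ᵥ u ≤ vnorm H u * Real.sqrt (c * (u ⬝ᵥ u)) :=
    h1.trans (mul_le_mul_of_nonneg_left h2 (vnorm_nonneg _ _))
  rcases eq_or_lt_of_le (dot_self_nonneg' u) with h0 | h0
  · rw [← h0]
    exact mul_nonneg hc0 (psd_dot_nonneg hH.posSemidef u)
  · have hsq : (u ⬝ᵥ u) ^ 2 ≤ (vnorm H u * Real.sqrt (c * (u ⬝ᵥ u))) ^ 2 := by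
      apply pow_le_pow_left₀ (dot_self_nonneg' u) h3
    rw [mul_pow, vnorm_sq hH.posSemidef, Real.sq_sqrt (mul_nonneg hc0 (dot_self_nonneg' u))]
      at hsq
    nlinarith [hsq, h0]

lemma wnorm_bddAbove [DecidableEq α] {H1 : Matrix α α ℝ} (hH1 : H1.PosDef)
    (H2 : Matrix β β ℝ) (M : Matrix β α ℝ) :
    BddAbove {r : ℝ | ∃ v : α → ℝ, v ≠ 0 ∧ r = vnorm H2 (M *ᵥ v) / vnorm H1 v} := by
  obtain ⟨c, hc0, hc⟩ := dot_le_pd hH1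
  set c₂ := ∑ i, ∑ j, |H2 i j| with hc₂
  set c₃ := ∑ i, ∑ j, |(Mᵀ * M) i j| with hc₃
  have hc₂0 : 0 ≤ c₂ := Finset.sum_nonneg fun _ _ => Finset.sum_nonneg fun _ _ => abs_nonneg _
  have hc₃0 : 0 ≤ c₃ := Finset.sum_nonneg fun _ _ => Finset.sum_nonneg fun _ _ => abs_nonneg _
  refine ⟨Real.sqrt (c₂ * (c₃ * c)), ?_⟩
  rintro r ⟨v, hv, rfl⟩
  have hBpos : 0 < vnorm H1 v := vnorm_pos hH1 hv
  rw [div_le_iff₀ hBpos]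
  have key : v ⬝ᵥ ((Mᵀ * M) *ᵥ v) = (M *ᵥ v) ⬝ᵥ (M *ᵥ v) := by
    rw [← Matrix.mulVec_mulVec, Matrix.dotProduct_mulVec, Matrix.vecMul_transpose]
  have h1 : (M *ᵥ v) ⬝ᵥ (H2 *ᵥ (M *ᵥ v)) ≤ c₂ * ((M *ᵥ v) ⬝ᵥ (M *ᵥ v)) := quad_bound _ _
  have h2 : (M *ᵥ v) ⬝ᵥ (M *ᵥ v) ≤ c₃ * (v ⬝ᵥ v) := by
    rw [← key]; exact quad_bound _ _
  have h3 : v ⬝ᵥ v ≤ c * (v ⬝ᵥ (H1 *ᵥ v)) := hc v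
  have hchain : (M *ᵥ v) ⬝ᵥ (H2 *ᵥ (M *ᵥ v)) ≤ (c₂ * (c₃ * c)) * (v ⬝ᵥ (H1 *ᵥ v)) := by
    calc (M *ᵥ v) ⬝ᵥ (H2 *ᵥ (M *ᵥ v)) ≤ c₂ * ((M *ᵥ v) ⬝ᵥ (M *ᵥ v)) := h1
      _ ≤ c₂ * (c₃ * (v ⬝ᵥ v)) := mul_le_mul_of_nonneg_left h2 hc₂0
      _ ≤ c₂ * (c₃ * (c * (v ⬝ᵥ (H1 *ᵥ v)))) := by
          apply mul_le_mul_of_nonneg_left _ hc₂0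
          exact mul_le_mul_of_nonneg_left h3 hc₃0
      _ = (c₂ * (c₃ * c)) * (v ⬝ᵥ (H1 *ᵥ v)) := by ring
  calc vnorm H2 (M *ᵥ v) = Real.sqrt ((M *ᵥ v) ⬝ᵥ (H2 *ᵥ (M *ᵥ v))) := rfl
    _ ≤ Real.sqrt ((c₂ * (c₃ * c)) * (v ⬝ᵥ (H1 *ᵥ v))) := Real.sqrt_le_sqrt hchain
    _ = Real.sqrt (c₂ * (c₃ * c)) * vnorm H1 v := by
        rw [Real.sqrt_mul (by positivity), vnorm_def]

lemma wnorm_pointwise [DecidableEq α] {H1 : Matrix α α ℝ} {H2 : Matrix β β ℝ}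
    {M : Matrix β α ℝ} (hH1 : H1.PosDef) {c : ℝ} (hw : wnorm H1 H2 M ≤ c) (v : α → ℝ) :
    vnorm H2 (M *ᵥ v) ≤ c * vnorm H1 v := by
  by_cases hv : v = 0
  · subst hv; simp [vnorm_def]
  · have hmem : vnorm H2 (M *ᵥ v) / vnorm H1 v ∈
        {r : ℝ | ∃ v : α → ℝ, v ≠ 0 ∧ r = vnorm H2 (M *ᵥ v) / vnorm H1 v} := ⟨v, hv, rfl⟩
    have hle : vnorm H2 (M *ᵥ v) / vnorm H1 v ≤ c :=
      (le_csSup (wnorm_bddAbove hH1 H2 M) hmem).trans hw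
    have hBpos : 0 < vnorm H1 v := vnorm_pos hH1 hv
    calc vnorm H2 (M *ᵥ v) = (vnorm H2 (M *ᵥ v) / vnorm H1 v) * vnorm H1 v := by
          field_simp
      _ ≤ c * vnorm H1 v := mul_le_mul_of_nonneg_right hle hBpos.le

lemma dot_sum_elim {γ δ : Type*} [Fintype γ] [Fintype δ]
    (w : γ ⊕ δ → ℝ) (f : γ → ℝ) (g : δ → ℝ) :
    w ⬝ᵥ (Sum.elim f g) = (w ∘ Sum.inl) ⬝ᵥ f + (w ∘ Sum.inr) ⬝ᵥ g := by
  simp [dotProduct, Fintype.sum_sum_type]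

lemma dot_fromBlocks {γ δ : Type*} [Fintype γ] [Fintype δ]
    (H1 : Matrix γ γ ℝ) (H2 : Matrix δ δ ℝ) (w : γ ⊕ δ → ℝ) :
    w ⬝ᵥ ((fromBlocks H1 0 0 H2) *ᵥ w) =
      (w ∘ Sum.inl) ⬝ᵥ (H1 *ᵥ (w ∘ Sum.inl)) + (w ∘ Sum.inr) ⬝ᵥ (H2 *ᵥ (w ∘ Sum.inr)) := by
  rw [Matrix.fromBlocks_mulVec, dot_sum_elim]
  simp [Matrix.zero_mulVec]

end Helpers

set_option maxHeartbeats 1600000 in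
theorem stmt_11
    {n m : ℕ} (F : Matrix (Fin n) (Fin n) ℝ) (B : Matrix (Fin m) (Fin n) ℝ)
    (H1 N : Matrix (Fin n) (Fin n) ℝ) (H2 : Matrix (Fin m) (Fin m) ℝ)
    (η C₁ C₂ : ℝ) (hη : 0 < η) (hC1 : 0 < C₁) (hC2 : 0 < C₂)
    (hH1 : H1 = ((1 : ℝ)/2) • (F + Fᵀ)) (hN : N = ((1 : ℝ)/2) • (F - Fᵀ))
    (hH1pd : H1.PosDef) (hH2pd : H2.PosDef)
    (hBrank : B.rank = m)
    (hNnorm : wnorm H1 H1⁻¹ N ≤ η)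
    (hBnorm : wnorm H1 H2⁻¹ B ≤ C₁)
    (hinfsup : ∀ x : Fin m → ℝ, x ≠ 0 → C₂ * vnorm H2 x ≤ vnorm H1⁻¹ (Bᵀ *ᵥ x))
    (K MD H : Matrix (Fin n ⊕ Fin m) (Fin n ⊕ Fin m) ℝ)
    (hK : K = fromBlocks F Bᵀ B 0)
    (hMD : MD = fromBlocks F 0 0 H2)
    (hH : H = fromBlocks H1 0 0 H2) :
    wnorm H H (MD⁻¹ * K)⁻¹ ≤ 1 + C₁ + (C₁ ^ 2 + C₁ + 1) * (1 + η) ^ 2 / C₂ ^ 2 := by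
  classical
  have hH1psd := hH1pd.posSemidef
  have hH2psd := hH2pd.posSemidef
  have hH1inv : (H1⁻¹).PosDef := hH1pd.inv
  have hF : F = H1 + N := by rw [hH1, hN]; module
  -- symmetric part identity
  have hsym : ∀ z : Fin n → ℝ, z ⬝ᵥ (H1 *ᵥ z) = z ⬝ᵥ (F *ᵥ z) := by
    intro z
    have ht : z ⬝ᵥ (Fᵀ *ᵥ z) = z ⬝ᵥ (F *ᵥ z) := by
      rw [Matrix.mulVec_transpose, dotProduct_comm, ← Matrix.dotProduct_mulVec]
    rw [hH1, Matrix.smul_mulVec, Matrix.add_mulVec, dotProduct_smul,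
      dotProduct_add, ht, smul_eq_mul]
    ring
  -- determinants
  have hdetF : F.det ≠ 0 := by
    intro h
    obtain ⟨v, hv, hFv⟩ := (Matrix.exists_mulVec_eq_zero_iff).mpr h
    have hpos := pd_dot_pos hH1pd hv
    rw [hsym, hFv, dotProduct_zero] at hpos
    exact lt_irrefl _ hpos
  have hdetH1 : IsUnit H1.det := isUnit_iff_ne_zero.mpr hH1pd.det_pos.ne'
  have hdetH2 : H2.det ≠ 0 := hH2pd.det_pos.ne'
  have hdetMD : MD.det ≠ 0 := by
    rw [hMD, Matrix.det_fromBlocks_zero₂₁]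
    exact mul_ne_zero hdetF hdetH2
  have hdetK : K.det ≠ 0 := by
    intro h
    obtain ⟨u, hu, hKu⟩ := (Matrix.exists_mulVec_eq_zero_iff).mpr h
    rw [hK, Matrix.fromBlocks_mulVec] at hKu
    have e1 : F *ᵥ (u ∘ Sum.inl) + Bᵀ *ᵥ (u ∘ Sum.inr) = 0 :=
      funext fun i => congrFun hKu (Sum.inl i)
    have e2 : B *ᵥ (u ∘ Sum.inl) + (0 : Matrix (Fin m) (Fin m) ℝ) *ᵥ (u ∘ Sum.inr) = 0 :=
      funext fun i => congrFun hKu (Sum.inr i)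
    rw [Matrix.zero_mulVec, add_zero] at e2
    have hxB : (u ∘ Sum.inl) ⬝ᵥ (Bᵀ *ᵥ (u ∘ Sum.inr)) = 0 := by
      rw [Matrix.dotProduct_mulVec, Matrix.vecMul_transpose, e2, zero_dotProduct]
    have hadd : (u ∘ Sum.inl) ⬝ᵥ (F *ᵥ (u ∘ Sum.inl)) +
        (u ∘ Sum.inl) ⬝ᵥ (Bᵀ *ᵥ (u ∘ Sum.inr)) = 0 := by
      rw [← dotProduct_add, e1, dotProduct_zero]
    have hx0 : (u ∘ Sum.inl) ⬝ᵥ (H1 *ᵥ (u ∘ Sum.inl)) = 0 := by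
      rw [hsym]; linarith
    have hx : u ∘ Sum.inl = 0 := by
      by_contra hx
      exact (pd_dot_pos hH1pd hx).ne' hx0
    have hBy : Bᵀ *ᵥ (u ∘ Sum.inr) = 0 := by
      rw [hx, Matrix.mulVec_zero, zero_add] at e1
      exact e1
    have hy : u ∘ Sum.inr = 0 := by
      by_contra hy
      have h1 := hinfsup _ hy
      rw [hBy, vnorm_zero] at h1
      have h3 : 0 < vnorm H2 (u ∘ Sum.inr) := vnorm_pos hH2pd hy
      nlinarith
    apply hu
    funext i
    cases i with
    | inl i => exact congrFun hx i
    | inr i => exact congrFun hy i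
  have hUK : IsUnit K.det := isUnit_iff_ne_zero.mpr hdetK
  have hUMD : IsUnit MD.det := isUnit_iff_ne_zero.mpr hdetMD
  have hinv : (MD⁻¹ * K)⁻¹ = K⁻¹ * MD := by
    rw [Matrix.mul_inv_rev, Matrix.nonsing_inv_nonsing_inv _ hUMD]
  rw [hinv]
  have hR0 : 0 ≤ 1 + C₁ + (C₁ ^ 2 + C₁ + 1) * (1 + η) ^ 2 / C₂ ^ 2 := by
    have h1 : 0 ≤ (C₁ ^ 2 + C₁ + 1) * (1 + η) ^ 2 / C₂ ^ 2 := by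
      apply div_nonneg _ (sq_nonneg _)
      apply mul_nonneg _ (sq_nonneg _)
      nlinarith
    nlinarith
  unfold wnorm
  apply Real.sSup_le _ hR0
  rintro r ⟨v, hv, rfl⟩
  -- main estimate
  set u := (K⁻¹ * MD) *ᵥ v with hudef
  have he : K *ᵥ u = MD *ᵥ v := by
    rw [hudef, Matrix.mulVec_mulVec, ← Matrix.mul_assoc, Matrix.mul_nonsing_inv _ hUK,
      Matrix.one_mul]
  set a := v ∘ Sum.inl with hadef
  set b := v ∘ Sum.inr with hbdef
  set x := u ∘ Sum.inl with hxdef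
  set y := u ∘ Sum.inr with hydef
  rw [hK, hMD, Matrix.fromBlocks_mulVec, Matrix.fromBlocks_mulVec] at he
  have E1 : F *ᵥ x + Bᵀ *ᵥ y = F *ᵥ a := by
    funext i
    have h := congrFun he (Sum.inl i)
    simpa [Matrix.zero_mulVec] using h
  have E2 : B *ᵥ x = H2 *ᵥ b := by
    funext i
    have h := congrFun he (Sum.inr i)
    simpa [Matrix.zero_mulVec] using h
  obtain ⟨z, hzdef⟩ : ∃ z : Fin n → ℝ, z = a - x := ⟨_, rfl⟩
  have hFz : F *ᵥ z = Bᵀ *ᵥ y := by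
    rw [hzdef, Matrix.mulVec_sub, ← E1]
    abel
  have hBz : B *ᵥ z = B *ᵥ a - H2 *ᵥ b := by
    rw [hzdef, Matrix.mulVec_sub, E2]
  -- nonnegativity
  have hXa0 := vnorm_nonneg H1 a
  have hXb0 := vnorm_nonneg H2 b
  have hX0 := vnorm_nonneg H1 x
  have hY0 := vnorm_nonneg H2 y
  have hZ0 := vnorm_nonneg H1 z
  have hZsq : vnorm H1 z ^ 2 = z ⬝ᵥ (F *ᵥ z) := by
    rw [vnorm_sq hH1psd, hsym]
  -- S1 : Z² ≤ Y (C₁ Xa + Xb)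
  have hS1 : vnorm H1 z ^ 2 ≤ vnorm H2 y * (C₁ * vnorm H1 a + vnorm H2 b) := by
    have h0 : z ⬝ᵥ (F *ᵥ z) = y ⬝ᵥ (B *ᵥ a) - y ⬝ᵥ (H2 *ᵥ b) := by
      rw [hFz, Matrix.dotProduct_mulVec, Matrix.vecMul_transpose, dotProduct_comm, hBz,
        dotProduct_sub]
    have h1 : y ⬝ᵥ (B *ᵥ a) ≤ vnorm H2 y * (C₁ * vnorm H1 a) := by
      calc y ⬝ᵥ (B *ᵥ a) ≤ vnorm H2 y * vnorm H2⁻¹ (B *ᵥ a) := dual_cs hH2pd y _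
        _ ≤ vnorm H2 y * (C₁ * vnorm H1 a) :=
            mul_le_mul_of_nonneg_left (wnorm_pointwise hH1pd hBnorm a) hY0
    have h2 : -(y ⬝ᵥ (H2 *ᵥ b)) ≤ vnorm H2 y * vnorm H2 b := by
      have h := psd_cs hH2psd y (-b)
      rw [Matrix.mulVec_neg, dotProduct_neg, vnorm_neg] at h
      exact h
    rw [hZsq, h0, mul_add]
    linarith
  -- S2 : C₂ Y ≤ (1+η) Z
  have hS2 : C₂ * vnorm H2 y ≤ (1 + η) * vnorm H1 z := by
    by_cases hy : y = 0
    · rw [hy, vnorm_zero, mul_zero]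
      exact mul_nonneg (by linarith) hZ0
    · have h1 := hinfsup y hy
      have h2 : vnorm H1⁻¹ (Bᵀ *ᵥ y) ≤ (1 + η) * vnorm H1 z := by
        rw [← hFz, hF, Matrix.add_mulVec]
        calc vnorm H1⁻¹ (H1 *ᵥ z + N *ᵥ z)
            ≤ vnorm H1⁻¹ (H1 *ᵥ z) + vnorm H1⁻¹ (N *ᵥ z) :=
              vnorm_triangle hH1inv.posSemidef _ _
          _ ≤ vnorm H1 z + η * vnorm H1 z := by
              rw [vnorm_inv_mulVec hH1pd]
              exact add_le_add_right (wnorm_pointwise hH1pd hNnorm z) _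
          _ = (1 + η) * vnorm H1 z := by ring
      linarith
  -- transpose bound : ‖Bᵀ y‖_{H1⁻¹} ≤ C₁ ‖y‖_{H2}
  have hBty : vnorm H1⁻¹ (Bᵀ *ᵥ y) ≤ C₁ * vnorm H2 y := by
    have hH1w : H1 *ᵥ (H1⁻¹ *ᵥ (Bᵀ *ᵥ y)) = Bᵀ *ᵥ y := by
      rw [Matrix.mulVec_mulVec, Matrix.mul_nonsing_inv _ hdetH1, Matrix.one_mulVec]
    have hvn : vnorm H1 (H1⁻¹ *ᵥ (Bᵀ *ᵥ y)) = vnorm H1⁻¹ (Bᵀ *ᵥ y) := by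
      conv_rhs => rw [← hH1w]
      exact (vnorm_inv_mulVec hH1pd _).symm
    have hsq : vnorm H1⁻¹ (Bᵀ *ᵥ y) ^ 2 = y ⬝ᵥ (B *ᵥ (H1⁻¹ *ᵥ (Bᵀ *ᵥ y))) := by
      rw [vnorm_sq hH1inv.posSemidef]
      calc (Bᵀ *ᵥ y) ⬝ᵥ (H1⁻¹ *ᵥ (Bᵀ *ᵥ y))
          = ((H1⁻¹ *ᵥ (Bᵀ *ᵥ y)) ᵥ* Bᵀ) ⬝ᵥ y := by
            rw [dotProduct_comm, Matrix.dotProduct_mulVec]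
        _ = y ⬝ᵥ (B *ᵥ (H1⁻¹ *ᵥ (Bᵀ *ᵥ y))) := by
            rw [Matrix.vecMul_transpose, dotProduct_comm]
    have hbnd : y ⬝ᵥ (B *ᵥ (H1⁻¹ *ᵥ (Bᵀ *ᵥ y))) ≤
        vnorm H2 y * (C₁ * vnorm H1⁻¹ (Bᵀ *ᵥ y)) := by
      calc y ⬝ᵥ (B *ᵥ (H1⁻¹ *ᵥ (Bᵀ *ᵥ y)))
          ≤ vnorm H2 y * vnorm H2⁻¹ (B *ᵥ (H1⁻¹ *ᵥ (Bᵀ *ᵥ y))) := dual_cs hH2pd y _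
        _ ≤ vnorm H2 y * (C₁ * vnorm H1 (H1⁻¹ *ᵥ (Bᵀ *ᵥ y))) :=
            mul_le_mul_of_nonneg_left (wnorm_pointwise hH1pd hBnorm _) hY0
        _ = vnorm H2 y * (C₁ * vnorm H1⁻¹ (Bᵀ *ᵥ y)) := by rw [hvn]
    have hT0 := vnorm_nonneg H1⁻¹ (Bᵀ *ᵥ y)
    nlinarith [hsq, hbnd, hT0, mul_nonneg hC1.le hY0]
  -- S3 : Z ≤ C₁ Y
  have hS3 : vnorm H1 z ≤ C₁ * vnorm H2 y := by
    have h1 : vnorm H1 z ^ 2 ≤ vnorm H1 z * (C₁ * vnorm H2 y) := by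
      rw [hZsq, hFz]
      calc z ⬝ᵥ (Bᵀ *ᵥ y) ≤ vnorm H1 z * vnorm H1⁻¹ (Bᵀ *ᵥ y) := dual_cs hH1pd z _
        _ ≤ vnorm H1 z * (C₁ * vnorm H2 y) := mul_le_mul_of_nonneg_left hBty hZ0
    nlinarith [h1, hZ0, mul_nonneg hC1.le hY0]
  -- S4 : X ≤ Xa + Z
  have hS4 : vnorm H1 x ≤ vnorm H1 a + vnorm H1 z := by
    have hx : x = a + -z := by rw [hzdef]; abel
    calc vnorm H1 x = vnorm H1 (a + -z) := by rw [hx]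
      _ ≤ vnorm H1 a + vnorm H1 (-z) := vnorm_triangle hH1psd _ _
      _ = vnorm H1 a + vnorm H1 z := by rw [vnorm_neg]
  -- Y bound
  have hYb : vnorm H2 y ≤ (1 + η) ^ 2 / C₂ ^ 2 * (C₁ * vnorm H1 a + vnorm H2 b) := by
    have hq : 0 ≤ C₁ * vnorm H1 a + vnorm H2 b := by
      have := mul_nonneg hC1.le hXa0; linarith
    have key : C₂ ^ 2 * vnorm H2 y ≤ (1 + η) ^ 2 * (C₁ * vnorm H1 a + vnorm H2 b) := by
      rcases eq_or_lt_of_le hY0 with h | h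
      · rw [← h, mul_zero]
        exact mul_nonneg (sq_nonneg _) hq
      · have h1 : (C₂ * vnorm H2 y) ^ 2 ≤ ((1 + η) * vnorm H1 z) ^ 2 :=
          pow_le_pow_left₀ (mul_nonneg hC2.le hY0) hS2 2
        have h2 : (1 + η) ^ 2 * (vnorm H1 z ^ 2) ≤
            (1 + η) ^ 2 * (vnorm H2 y * (C₁ * vnorm H1 a + vnorm H2 b)) :=
          mul_le_mul_of_nonneg_left hS1 (sq_nonneg _)
        nlinarith [h1, h2, h]
    rw [div_mul_eq_mul_div, le_div_iff₀ (by positivity)]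
    nlinarith [key]
  -- norms of the block vectors
  have huv : u ⬝ᵥ (H *ᵥ u) = vnorm H1 x ^ 2 + vnorm H2 y ^ 2 := by
    rw [hH, dot_fromBlocks, ← hxdef, ← hydef, vnorm_sq hH1psd, vnorm_sq hH2psd]
  have hvv : v ⬝ᵥ (H *ᵥ v) = vnorm H1 a ^ 2 + vnorm H2 b ^ 2 := by
    rw [hH, dot_fromBlocks, ← hadef, ← hbdef, vnorm_sq hH1psd, vnorm_sq hH2psd]
  have hW2 : vnorm H v ^ 2 = vnorm H1 a ^ 2 + vnorm H2 b ^ 2 := by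
    rw [vnorm_def, Real.sq_sqrt, hvv]
    rw [hvv]; positivity
  have hW0 := vnorm_nonneg H v
  have hWpos : 0 < vnorm H v := by
    have hab : a ≠ 0 ∨ b ≠ 0 := by
      by_contra hc
      push_neg at hc
      apply hv
      funext i
      cases i with
      | inl i => exact congrFun hc.1 i
      | inr i => exact congrFun hc.2 i
    have hpos : 0 < v ⬝ᵥ (H *ᵥ v) := by
      rw [hvv]
      rcases hab with h | h
      · have := vnorm_pos hH1pd h
        nlinarith [sq_nonneg (vnorm H2 b)]
      · have := vnorm_pos hH2pd h
        nlinarith [sq_nonneg (vnorm H1 a)]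
    exact Real.sqrt_pos.mpr hpos
  rw [div_le_iff₀ hWpos]
  -- ‖u‖_H ≤ X + Y
  have hu_le : vnorm H u ≤ vnorm H1 x + vnorm H2 y := by
    have h1 : vnorm H u = Real.sqrt (vnorm H1 x ^ 2 + vnorm H2 y ^ 2) := by
      rw [vnorm_def, huv]
    rw [h1]
    calc Real.sqrt (vnorm H1 x ^ 2 + vnorm H2 y ^ 2)
        ≤ Real.sqrt ((vnorm H1 x + vnorm H2 y) ^ 2) :=
          Real.sqrt_le_sqrt (by nlinarith [mul_nonneg hX0 hY0])
      _ = vnorm H1 x + vnorm H2 y := Real.sqrt_sq (by linarith)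
  -- scalar endgame
  obtain ⟨s, hs0, hs⟩ : ∃ s : ℝ, 0 ≤ s ∧ s ^ 2 = C₁ ^ 2 + 1 :=
    ⟨Real.sqrt (C₁ ^ 2 + 1), Real.sqrt_nonneg _, Real.sq_sqrt (by positivity)⟩
  have hsle : (1 + C₁) * s ≤ C₁ ^ 2 + C₁ + 1 := by
    apply le_of_pow_le_pow_left₀ two_ne_zero (by nlinarith)
    nlinarith [hs, hC1, sq_nonneg C₁]
  have hCS2 : C₁ * vnorm H1 a + vnorm H2 b ≤ s * vnorm H v := by
    apply le_of_pow_le_pow_left₀ two_ne_zero (mul_nonneg hs0 hW0)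
    rw [mul_pow, hs, hW2]
    nlinarith [sq_nonneg (C₁ * vnorm H2 b - vnorm H1 a)]
  have hXaW : vnorm H1 a ≤ vnorm H v := by
    apply le_of_pow_le_pow_left₀ two_ne_zero hW0
    rw [hW2]
    nlinarith [sq_nonneg (vnorm H2 b)]
  have hr0 : 0 ≤ (1 + η) ^ 2 / C₂ ^ 2 := by positivity
  have st1 : vnorm H2 y ≤ (1 + η) ^ 2 / C₂ ^ 2 * (s * vnorm H v) :=
    hYb.trans (mul_le_mul_of_nonneg_left hCS2 hr0)
  have st2 : vnorm H u ≤ vnorm H1 a + (1 + C₁) * vnorm H2 y := by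
    linarith [hu_le, hS4, hS3]
  have st3 : (1 + C₁) * vnorm H2 y ≤
      (1 + C₁) * ((1 + η) ^ 2 / C₂ ^ 2 * (s * vnorm H v)) :=
    mul_le_mul_of_nonneg_left st1 (by linarith)
  have st5 : ((1 + C₁) * s) * ((1 + η) ^ 2 / C₂ ^ 2 * vnorm H v) ≤
      (C₁ ^ 2 + C₁ + 1) * ((1 + η) ^ 2 / C₂ ^ 2 * vnorm H v) :=
    mul_le_mul_of_nonneg_right hsle (mul_nonneg hr0 hW0)
  have hfin : vnorm H u ≤ vnorm H v + (C₁ ^ 2 + C₁ + 1) * ((1 + η) ^ 2 / C₂ ^ 2 * vnorm H v) := by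
    linarith [st2, st3, st5, hXaW]
  have hexp : (1 + C₁ + (C₁ ^ 2 + C₁ + 1) * (1 + η) ^ 2 / C₂ ^ 2) * vnorm H v =
      vnorm H v + C₁ * vnorm H v + (C₁ ^ 2 + C₁ + 1) * ((1 + η) ^ 2 / C₂ ^ 2 * vnorm H v) := by
    ring
  rw [hexp]
  linarith [hfin, mul_nonneg hC1.le hW0]
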